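/- Let G=(B⊎R, E_G) be a bipartite graph with no isolated vertices and κ a positive integer. Build a BNPG on the graph obtained from G by adding a vertex v* adjacent to all of B, with: g_v(0)=0 and g_v(x)=1 for x≥1 and c(v)=1 for v∈R; g_v(0)=1, g_v(1)=2, g_v(x)=0 for x≥2, c(v)=1 for v∈B; g_{v*}(x)=1 for x≤κ, g_{v*}(x)=0 for x>κ, c(v*)=1. Then there exists a profile with egalitarian social welfare at least 1 if and only if there exists B'⊆B with |B'|≤κ dominating R (every vertex of R has a neighbor in B'). -/

import Mathlib

attribute [local instance] Classical.propDecidable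

noncomputable section

variable {V : Type*}

/-- Number of investing closed neighbors of `v` under profile `s`. -/
def cNbr (G : SimpleGraph V) (s : Finset V) (v : V) : ℕ :=
  (s.filter fun u => G.Adj v u ∨ u = v).card

/-- Payoff of player `v` under profile `s` in the BNPG on `G` with
externality functions `g` and costs `c`. -/
def payoff (G : SimpleGraph V) (g : V → ℕ → ℝ) (c : V → ℝ) (s : Finset V) (v : V) : ℝ :=
  g v (cNbr G s v) - (if v ∈ s then c v else 0)

/-- The profile obtained from `s` by flipping the action of `v`. -/
def flipProfile (s : Finset V) (v : V) : Finset V :=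
  if v ∈ s then s.erase v else insert v s

/-- Pure-strategy Nash equilibrium: nobody gains by flipping her own action. -/
def IsPSNE (G : SimpleGraph V) (g : V → ℕ → ℝ) (c : V → ℝ) (s : Finset V) : Prop :=
  ∀ v, payoff G g c (flipProfile s v) v ≤ payoff G g c s v

/-- Utilitarian social welfare. -/
def USW (G : SimpleGraph V) [Fintype V] (g : V → ℕ → ℝ) (c : V → ℝ) (s : Finset V) : ℝ :=
  ∑ v, payoff G g c s v

/-- Egalitarian social welfare: the minimum payoff of a player. -/
def ESW (G : SimpleGraph V) (g : V → ℕ → ℝ) (c : V → ℝ) (s : Finset V) : ℝ :=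
  ⨅ v, payoff G g c s v

variable {B R : Type*} [Fintype B] [Fintype R]

/-- Players of the RBDS reduction: blue players, red players, and the apex v*. -/
abbrev RBPlayers (B R : Type*) := B ⊕ (R ⊕ Unit)

/-- One-directional adjacency of the RBDS reduction network, for a bipartite graph
with edge relation E between B and R. -/
def rbRel (E : B → R → Prop) : RBPlayers B R → RBPlayers B R → Prop
  | Sum.inl b, Sum.inr (Sum.inl r) => E b r
  | Sum.inl _, Sum.inr (Sum.inr _) => True
  | _, _ => False

/-- The RBDS reduction network: G together with v* adjacent to all of B. -/
def rbNet (E : B → R → Prop) : SimpleGraph (RBPlayers B R) where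
  Adj a b := rbRel E a b ∨ rbRel E b a
  symm := ⟨fun _ _ h => h.symm⟩
  loopless := ⟨by
    intro a h
    rcases h with h | h <;> rcases a with b | r | u <;> exact h⟩

/-- Externality functions of the RBDS reduction. -/
def rbG (κ : ℕ) : RBPlayers B R → ℕ → ℝ
  | Sum.inl _, x => if x = 0 then 1 else if x = 1 then 2 else 0
  | Sum.inr (Sum.inl _), x => if x = 0 then 0 else 1
  | Sum.inr (Sum.inr _), x => if x ≤ κ then 1 else 0

/-- there is a profile with egalitarian social welfare at least 1 iff
there is a set B' ⊆ B of at most κ blue vertices dominating R. -/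
theorem stmt_6 (E : B → R → Prop)
    (hnoIsoB : ∀ b, ∃ r, E b r) (hnoIsoR : ∀ r, ∃ b, E b r)
    (κ : ℕ) (hκ : 0 < κ) :
    (∃ s : Finset (RBPlayers B R), 1 ≤ ESW (rbNet E) (rbG κ) (fun _ => 1) s) ↔
      ∃ B' : Finset B, B'.card ≤ κ ∧ ∀ r : R, ∃ b ∈ B', E b r := by
  constructor
  · rintro ⟨s, hs⟩
    have hall : ∀ v, (1:ℝ) ≤ payoff (rbNet E) (rbG κ) (fun _ => 1) s v := fun v =>
      le_trans hs (ciInf_le (Set.finite_range _).bddBelow v)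
    have hgp : ∀ x, rbG (B := B) (R := R) κ (Sum.inr (Sum.inr ())) x ≤ 1 := by
      intro x
      show (if x ≤ κ then (1:ℝ) else 0) ≤ 1
      split_ifs <;> norm_num
    have hpns : (Sum.inr (Sum.inr ()) : RBPlayers B R) ∉ s := by
      intro hmem
      have h1 := hall (Sum.inr (Sum.inr ()))
      rw [payoff, if_pos hmem] at h1
      have := hgp (cNbr (rbNet E) s (Sum.inr (Sum.inr ())))
      linarith
    have hκ' : cNbr (rbNet E) s (Sum.inr (Sum.inr ())) ≤ κ := by
      by_contra hgt
      have h1 := hall (Sum.inr (Sum.inr ()))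
      rw [payoff, if_neg hpns] at h1
      have hz : rbG (B := B) (R := R) κ (Sum.inr (Sum.inr ()))
          (cNbr (rbNet E) s (Sum.inr (Sum.inr ()))) = 0 := by
        show (if _ ≤ κ then (1:ℝ) else 0) = 0
        rw [if_neg hgt]
      rw [hz] at h1
      linarith
    refine ⟨Finset.univ.filter (fun b => Sum.inl b ∈ s), le_trans ?_ hκ', ?_⟩
    · rw [cNbr]
      apply Finset.card_le_card_of_injOn (fun b => Sum.inl b)
      · intro b hb
        simp only [Finset.mem_coe, Finset.mem_filter, Finset.mem_univ, true_and] at hb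
        simp only [Finset.mem_coe, Finset.mem_filter]
        refine ⟨hb, Or.inl (Or.inr ?_)⟩
        exact trivial
      · intro a _ b _ h
        exact Sum.inl.inj h
    · intro r
      have hrns : (Sum.inr (Sum.inl r) : RBPlayers B R) ∉ s := by
        intro hmem
        have h1 := hall (Sum.inr (Sum.inl r))
        rw [payoff, if_pos hmem] at h1
        have hle : rbG (B := B) (R := R) κ (Sum.inr (Sum.inl r))
            (cNbr (rbNet E) s (Sum.inr (Sum.inl r))) ≤ 1 := by
          show (if _ = 0 then (0:ℝ) else 1) ≤ 1
          split_ifs <;> norm_num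
        linarith
      have h1 := hall (Sum.inr (Sum.inl r))
      rw [payoff, if_neg hrns] at h1
      have hne : cNbr (rbNet E) s (Sum.inr (Sum.inl r)) ≠ 0 := by
        intro h0
        have hz : rbG (B := B) (R := R) κ (Sum.inr (Sum.inl r))
            (cNbr (rbNet E) s (Sum.inr (Sum.inl r))) = 0 := by
          show (if _ = 0 then (0:ℝ) else 1) = 0
          rw [if_pos h0]
        rw [hz] at h1
        linarith
      rw [cNbr] at hne
      obtain ⟨u, hu⟩ := Finset.card_pos.mp (Nat.pos_of_ne_zero hne)
      simp only [Finset.mem_filter] at hu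
      obtain ⟨hus, hcond⟩ := hu
      rcases hcond with hadj | heq
      · rcases u with b | r' | u'
        · have h2 : False ∨ E b r := hadj
          refine ⟨b, ?_, h2.resolve_left id⟩
          simp [Finset.mem_filter, hus]
        · exact ((hadj : False ∨ False).resolve_left id).elim
        · exact ((hadj : False ∨ False).resolve_left id).elim
      · exact absurd (heq ▸ hus) hrns
  · rintro ⟨B', hcard, hdom⟩
    refine ⟨B'.image Sum.inl, le_ciInf fun v => ?_⟩
    rcases v with b | r | u
    · -- blue player
      have hmem : (Sum.inl b : RBPlayers B R) ∈ B'.image Sum.inl ↔ b ∈ B' := by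
        simp [Finset.mem_image]
      have hc : cNbr (rbNet E) (B'.image Sum.inl) (Sum.inl b) = if b ∈ B' then 1 else 0 := by
        rw [cNbr]
        split_ifs with hb
        · rw [Finset.card_eq_one]
          refine ⟨Sum.inl b, Finset.eq_singleton_iff_unique_mem.mpr ⟨?_, ?_⟩⟩
          · simp only [Finset.mem_filter]
            exact ⟨hmem.mpr hb, Or.inr trivial⟩
          · intro u hu
            simp only [Finset.mem_filter] at hu
            obtain ⟨hus, hcond⟩ := hu
            rcases hcond with hadj | heq
            · rw [Finset.mem_image] at hus
              obtain ⟨b', _, rfl⟩ := hus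
              exact ((hadj : False ∨ False).resolve_left id).elim
            · exact heq
        · rw [Finset.card_eq_zero, Finset.eq_empty_iff_forall_notMem]
          intro u hu
          simp only [Finset.mem_filter] at hu
          obtain ⟨hus, hcond⟩ := hu
          rw [Finset.mem_image] at hus
          obtain ⟨b', hb', rfl⟩ := hus
          rcases hcond with hadj | heq
          · exact ((hadj : False ∨ False).resolve_left id).elim
          · exact hb (Sum.inl.inj heq ▸ hb')
      by_cases hb : b ∈ B'
      · rw [payoff, if_pos (hmem.mpr hb), hc, if_pos hb]
        show (1:ℝ) ≤ (if (1:ℕ) = 0 then (1:ℝ) else if (1:ℕ) = 1 then 2 else 0) - 1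
        norm_num
      · rw [payoff, if_neg (fun h => hb (hmem.mp h)), hc, if_neg hb]
        show (1:ℝ) ≤ (if (0:ℕ) = 0 then (1:ℝ) else if (0:ℕ) = 1 then 2 else 0) - 0
        norm_num
    · -- red player
      have hrns : (Sum.inr (Sum.inl r) : RBPlayers B R) ∉ B'.image Sum.inl := by
        simp [Finset.mem_image]
      obtain ⟨b, hb, hE⟩ := hdom r
      have hpos : 0 < cNbr (rbNet E) (B'.image Sum.inl) (Sum.inr (Sum.inl r)) := by
        rw [cNbr]
        apply Finset.card_pos.mpr
        refine ⟨Sum.inl b, ?_⟩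
        simp only [Finset.mem_filter]
        refine ⟨Finset.mem_image.mpr ⟨b, hb, rfl⟩, Or.inl (Or.inr ?_)⟩
        exact hE
      rw [payoff, if_neg hrns]
      have hz : rbG (B := B) (R := R) κ (Sum.inr (Sum.inl r))
          (cNbr (rbNet E) (B'.image Sum.inl) (Sum.inr (Sum.inl r))) = 1 := by
        show (if _ = 0 then (0:ℝ) else 1) = 1
        rw [if_neg (Nat.pos_iff_ne_zero.mp hpos)]
      rw [hz]
      norm_num
    · -- apex
      have hpns : (Sum.inr (Sum.inr u) : RBPlayers B R) ∉ B'.image Sum.inl := by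
        simp [Finset.mem_image]
      have hc : cNbr (rbNet E) (B'.image Sum.inl) (Sum.inr (Sum.inr u)) ≤ κ := by
        rw [cNbr]
        refine le_trans (Finset.card_le_card ?_) (le_trans (Finset.card_image_le (f := Sum.inl)) hcard)
        intro x hx
        simp only [Finset.mem_filter] at hx
        exact hx.1
      rw [payoff, if_neg hpns]
      have hz : rbG (B := B) (R := R) κ (Sum.inr (Sum.inr u))
          (cNbr (rbNet E) (B'.image Sum.inl) (Sum.inr (Sum.inr u))) = 1 := by
        show (if _ ≤ κ then (1:ℝ) else 0) = 1
        rw [if_pos hc]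
      rw [hz]
      norm_num

end
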